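/- Suppose κ₁ ≥ ... ≥ κₙ and κ ∈ Γ_{m+1}⁺ (σⱼ(κ) > 0 for j = 1,...,m+1). Then σₘ(κ) ≥ κ₁κ₂···κₘ. -/
import Mathlib


open Finset

/-- The m-th elementary symmetric polynomial of κ : Fin n → ℝ. -/
noncomputable def esymm (n m : ℕ) (κ : Fin n → ℝ) : ℝ :=
  ∑ s ∈ Finset.powersetCard m (Finset.univ : Finset (Fin n)), ∏ i ∈ s, κ i

namespace Stmt13

open Polynomial

lemma esymm_zero (S : Multiset ℝ) : S.esymm 0 = 1 := by
  simp [Multiset.esymm, Multiset.powersetCard_zero_left]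

lemma esymm_of_card_lt {S : Multiset ℝ} {k : ℕ} (h : Multiset.card S < k) : S.esymm k = 0 := by
  simp [Multiset.esymm, Multiset.powersetCard_eq_empty _ h]

lemma esymm_cons (a : ℝ) (S : Multiset ℝ) (k : ℕ) :
    (a ::ₘ S).esymm (k + 1) = S.esymm (k + 1) + a * S.esymm k := by
  unfold Multiset.esymm
  rw [Multiset.powersetCard_cons, Multiset.map_add, Multiset.sum_add]
  congr 1
  rw [Multiset.map_map]
  have : Multiset.map (Multiset.prod ∘ (a ::ₘ ·)) (S.powersetCard k)
      = Multiset.map (fun t => a * t) (Multiset.map Multiset.prod (S.powersetCard k)) := by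
    rw [Multiset.map_map]
    exact Multiset.map_congr rfl fun t _ => by simp [Multiset.prod_cons]
  rw [this, Multiset.sum_map_mul_left]
  simp [Multiset.map_id']

lemma esymm_one (S : Multiset ℝ) : S.esymm 1 = S.sum := by
  rw [Multiset.esymm, Multiset.powersetCard_one, Multiset.map_map]
  simp

lemma esymm_card (S : Multiset ℝ) : S.esymm (Multiset.card S) = S.prod := by
  induction S using Multiset.induction with
  | empty => simp [esymm_zero]
  | cons a S ih =>
      rw [Multiset.card_cons, esymm_cons, esymm_of_card_lt (by omega), ih, Multiset.prod_cons]
      ring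

lemma esymm_two (S : Multiset ℝ) :
    2 * S.esymm 2 = S.sum ^ 2 - (S.map (fun x => x ^ 2)).sum := by
  induction S using Multiset.induction with
  | empty => simp [esymm_of_card_lt (by simp : Multiset.card (0 : Multiset ℝ) < 2)]
  | cons a S ih =>
      rw [show (2:ℕ) = 1 + 1 from rfl] at ih ⊢
      rw [esymm_cons, Multiset.sum_cons, Multiset.map_cons, Multiset.sum_cons, esymm_one]
      ring_nf
      ring_nf at ih
      linarith [ih]

lemma msum_pos {S : Multiset ℝ} (h : ∀ x ∈ S, 0 < x) (hne : S ≠ 0) : 0 < S.sum := by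
  induction S using Multiset.induction with
  | empty => exact absurd rfl hne
  | cons a S ih =>
      rw [Multiset.sum_cons]
      have ha := h a (Multiset.mem_cons_self a S)
      have : 0 ≤ S.sum := Multiset.sum_nonneg fun x hx => (h x (Multiset.mem_cons_of_mem hx)).le
      linarith

lemma mprod_pos {S : Multiset ℝ} (h : ∀ x ∈ S, 0 < x) : 0 < S.prod := by
  induction S using Multiset.induction with
  | empty => simp
  | cons a S ih =>
      rw [Multiset.prod_cons]
      exact mul_pos (h a (Multiset.mem_cons_self a S))
        (ih fun x hx => h x (Multiset.mem_cons_of_mem hx))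

lemma esymm_pos_of_pos {S : Multiset ℝ} (h : ∀ x ∈ S, 0 < x) {j : ℕ}
    (hj : j ≤ Multiset.card S) : 0 < S.esymm j := by
  rw [Multiset.esymm]
  apply msum_pos
  · intro x hx
    obtain ⟨t, ht, rfl⟩ := Multiset.mem_map.mp hx
    exact mprod_pos fun y hy =>
      h y (Multiset.mem_of_le (Multiset.mem_powersetCard.mp ht).1 hy)
  · intro h0
    rw [Multiset.map_eq_zero] at h0
    have := Multiset.card_powersetCard j S
    rw [h0] at this
    exact absurd this.symm (Nat.choose_pos hj).ne'

lemma esymm_rev {S : Multiset ℝ} (h : ∀ x ∈ S, x ≠ 0) :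
    ∀ q ≤ Multiset.card S,
      S.esymm (Multiset.card S - q) = S.prod * (S.map (·⁻¹)).esymm q := by
  induction S using Multiset.induction with
  | empty =>
      intro q hq
      simp only [Multiset.card_zero, Nat.le_zero] at hq
      subst hq
      simp [esymm_zero]
  | cons a S ih =>
      intro q hq
      have ha : a ≠ 0 := h a (Multiset.mem_cons_self a S)
      have hS : ∀ x ∈ S, x ≠ 0 := fun x hx => h x (Multiset.mem_cons_of_mem hx)
      have hca : Multiset.card (a ::ₘ S) = Multiset.card S + 1 := Multiset.card_cons a S
      have hWc : Multiset.card (S.map (·⁻¹)) = Multiset.card S := Multiset.card_map _ S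
      rw [hca] at hq ⊢
      rw [Multiset.map_cons, Multiset.prod_cons]
      rcases Nat.lt_or_ge q 1 with hq0 | hq1
      · -- q = 0
        interval_cases q
        rw [Nat.sub_zero, ← hca, esymm_card, Multiset.prod_cons, esymm_zero, mul_one]
      · rcases Nat.lt_or_ge q (Multiset.card S + 1) with hqlt | hqge
        · -- 1 ≤ q ≤ card S
          have hqc : q ≤ Multiset.card S := by omega
          obtain ⟨q', rfl⟩ : ∃ q', q = q' + 1 := ⟨q - 1, by omega⟩
          have e1 : Multiset.card S + 1 - (q' + 1) = (Multiset.card S - (q' + 1)) + 1 := by omega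
          rw [e1, esymm_cons]
          have e2 : Multiset.card S - (q' + 1) + 1 = Multiset.card S - q' := by omega
          rw [e2]
          rw [ih hS (q' + 1) hqc, ih hS q' (by omega), esymm_cons]
          field_simp
          ring
        · -- q = card S + 1
          have hq' : q = Multiset.card S + 1 := by omega
          subst hq'
          rw [Nat.sub_self, esymm_zero, esymm_cons]
          have hW1 : (Multiset.map (·⁻¹) S).esymm (Multiset.card S + 1) = 0 :=
            esymm_of_card_lt (by rw [hWc]; omega)
          have hW2 : (Multiset.map (·⁻¹) S).esymm (Multiset.card S)
              = (Multiset.map (·⁻¹) S).prod := by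
            rw [← hWc, esymm_card]
          have hprod : S.prod * (Multiset.map (·⁻¹) S).prod = 1 := by
            calc S.prod * (Multiset.map (·⁻¹) S).prod
                = (S.map (fun x => x)).prod * (S.map (·⁻¹)).prod := by
                  rw [Multiset.map_id']
              _ = (S.map (fun x => x * x⁻¹)).prod := (Multiset.prod_map_mul).symm
              _ = (S.map (fun _ => (1:ℝ))).prod := by
                  exact congrArg _ (Multiset.map_congr rfl fun x hx =>
                    mul_inv_cancel₀ (hS x hx))
              _ = 1 := by simp
          rw [hW1, hW2, zero_add,
            show a * S.prod * (a⁻¹ * (Multiset.map (·⁻¹) S).prod)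
              = (a * a⁻¹) * (S.prod * (Multiset.map (·⁻¹) S).prod) from by ring,
            mul_inv_cancel₀ ha, one_mul, hprod]

lemma top_newton {R : Multiset ℝ} {j : ℕ} (hj : 1 ≤ j) (hcard : Multiset.card R = j + 1)
    (h0 : R.esymm j = 0) : R.esymm (j + 1) * R.esymm (j - 1) ≤ 0 := by
  have htop : R.esymm (j + 1) = R.prod := by rw [← hcard, esymm_card]
  rcases eq_or_ne R.prod 0 with hp | hp
  · rw [htop, hp, zero_mul]
  · have hx : ∀ x ∈ R, x ≠ 0 := by
      intro x hxR hx0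
      exact hp (Multiset.prod_eq_zero (hx0 ▸ hxR))
    set W := R.map (·⁻¹) with hW
    have h1 : R.esymm j = R.prod * W.esymm 1 := by
      have := esymm_rev hx 1 (by omega)
      rw [hcard] at this
      simpa using this
    have hsum : W.sum = 0 := by
      rw [h1, esymm_one] at h0
      rcases mul_eq_zero.mp h0 with h | h
      · exact absurd h hp
      · exact h
    have h2 : R.esymm (j - 1) = R.prod * W.esymm 2 := by
      have := esymm_rev hx 2 (by omega)
      rw [hcard] at this
      have e : j + 1 - 2 = j - 1 := by omega
      rw [e] at this
      exact this
    have h3 : 2 * W.esymm 2 = W.sum ^ 2 - (W.map (fun x => x ^ 2)).sum := esymm_two W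
    have h4 : 0 ≤ (W.map (fun x => x ^ 2)).sum :=
      Multiset.sum_nonneg (by
        intro y hy
        obtain ⟨x, _, rfl⟩ := Multiset.mem_map.mp hy
        positivity)
    rw [htop, h2]
    rw [hsum] at h3
    nlinarith [sq_nonneg R.prod]

noncomputable def P (S : Multiset ℝ) : ℝ[X] := (S.map fun a => X + C a).prod

lemma monic_P (S : Multiset ℝ) : (P S).Monic :=
  monic_multiset_prod_of_monic S _ fun a _ => monic_X_add_C a

lemma natDegree_P (S : Multiset ℝ) : (P S).natDegree = Multiset.card S := by
  rw [P, natDegree_multiset_prod_of_monic _ (fun f hf => by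
      obtain ⟨a, _, rfl⟩ := Multiset.mem_map.mp hf
      exact monic_X_add_C a), Multiset.map_map]
  simp [Function.comp_def, natDegree_X_add_C]

lemma coeff_P {S : Multiset ℝ} {k : ℕ} (h : k ≤ Multiset.card S) :
    (P S).coeff k = S.esymm (Multiset.card S - k) :=
  Multiset.prod_X_add_C_coeff S h

lemma roots_P (S : Multiset ℝ) : (P S).roots = S.map (fun a => -a) := by
  have : P S = ((S.map fun a => -a).map fun a => X - C a).prod := by
    rw [Multiset.map_map]
    exact congrArg _ (Multiset.map_congr rfl fun a _ => by simp)
  rw [this, roots_multiset_prod_X_sub_C]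

lemma P_shift (S : Multiset ℝ) (t : ℝ) : P (S.map (· + t)) = taylor t (P S) := by
  rw [taylor_apply, P, P, multiset_prod_comp, Multiset.map_map, Multiset.map_map]
  exact congrArg _ (Multiset.map_congr rfl fun a _ => by
    simp only [Function.comp_apply, add_comp, X_comp, C_comp, map_add]
    ring)

lemma esymm_shift {S : Multiset ℝ} {j : ℕ} (hj : j ≤ Multiset.card S) (t : ℝ) :
    (S.map (· + t)).esymm j = (hasseDeriv (Multiset.card S - j) (P S)).eval t := by
  have h1 : (P (S.map (· + t))).coeff (Multiset.card S - j)
      = (S.map (· + t)).esymm j := by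
    rw [coeff_P (by rw [Multiset.card_map]; omega), Multiset.card_map]
    congr 1
    omega
  rw [← h1, P_shift, taylor_coeff]

def Gam (k : ℕ) (S : Multiset ℝ) : Prop := ∀ j, 1 ≤ j → j ≤ k → 0 < S.esymm j

lemma Gam.mono {k k' : ℕ} {S : Multiset ℝ} (h : k' ≤ k) (hG : Gam k S) : Gam k' S :=
  fun j h1 h2 => hG j h1 (h2.trans h)

lemma Gam.nonneg {k : ℕ} {S : Multiset ℝ} (hG : Gam k S) {j : ℕ} (hj : j ≤ k) :
    0 ≤ S.esymm j := by
  rcases j with _ | j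
  · rw [esymm_zero]; norm_num
  · exact (hG _ (by omega) hj).le

lemma Gam_shift {k : ℕ} {S : Multiset ℝ} (hG : Gam k S) (hk : k ≤ Multiset.card S)
    {t : ℝ} (ht : 0 ≤ t) : Gam k (S.map (· + t)) := by
  intro j hj1 hjk
  have hjc : j ≤ Multiset.card S := hjk.trans hk
  rw [esymm_shift hjc t]
  have hdeg : (hasseDeriv (Multiset.card S - j) (P S)).natDegree < j + 1 := by
    have := natDegree_hasseDeriv_le (P S) (Multiset.card S - j)
    rw [natDegree_P] at this
    omega
  rw [eval_eq_sum_range' hdeg]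
  apply Finset.sum_pos'
  · intro q hq
    rw [Finset.mem_range] at hq
    rw [hasseDeriv_coeff, coeff_P (by omega)]
    have e : Multiset.card S - (q + (Multiset.card S - j)) = j - q := by omega
    rw [e]
    have h1 : (0:ℝ) ≤ S.esymm (j - q) := hG.nonneg (by omega)
    positivity
  · refine ⟨0, Finset.mem_range.mpr (by omega), ?_⟩
    rw [hasseDeriv_coeff, coeff_P (by omega)]
    have e : Multiset.card S - (0 + (Multiset.card S - j)) = j := by omega
    rw [e]
    have h1 : 0 < S.esymm j := hG j hj1 hjk
    simp only [zero_add, Nat.choose_self, Nat.cast_one, one_mul, pow_zero, mul_one]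
    exact h1

lemma pos_of_Gam_card {S : Multiset ℝ} (hG : Gam (Multiset.card S) S) :
    ∀ x ∈ S, 0 < x := by
  intro x hx
  by_contra hle
  push_neg at hle
  have hc1 : 1 ≤ Multiset.card S := by
    rcases Multiset.exists_cons_of_mem hx with ⟨T, rfl⟩
    rw [Multiset.card_cons]; omega
  have h1 : (P S).eval (-x) = 0 := by
    rw [P, eval_multiset_prod]
    apply Multiset.prod_eq_zero
    rw [Multiset.map_map]
    exact Multiset.mem_map.mpr ⟨x, hx, by simp⟩
  have h2 : 0 < (P S).eval (-x) := by
    rw [eval_eq_sum_range' (n := Multiset.card S + 1) (by rw [natDegree_P]; omega)]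
    apply Finset.sum_pos'
    · intro q hq
      rw [Finset.mem_range] at hq
      rw [coeff_P (by omega)]
      have h3 : (0:ℝ) ≤ S.esymm (Multiset.card S - q) := hG.nonneg (by omega)
      have h4 : (0:ℝ) ≤ (-x) ^ q := pow_nonneg (by linarith) q
      positivity
    · refine ⟨0, Finset.mem_range.mpr (by omega), ?_⟩
      rw [coeff_P (by omega), Nat.sub_zero, pow_zero, mul_one]
      exact hG _ hc1 le_rfl
  linarith

lemma deriv_step {p : ℝ[X]} (hroots : Multiset.card p.roots = p.natDegree)
    (hdeg : p.natDegree ≠ 0) :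
    (derivative p) ≠ 0 ∧ (derivative p).natDegree = p.natDegree - 1 ∧
      Multiset.card (derivative p).roots = p.natDegree - 1 := by
  have hp : p ≠ 0 := fun h => hdeg (by rw [h, natDegree_zero])
  have hcoeff : (derivative p).coeff (p.natDegree - 1) ≠ 0 := by
    rw [coeff_derivative]
    have e : p.natDegree - 1 + 1 = p.natDegree := by omega
    rw [e]
    have h1 : p.coeff p.natDegree ≠ 0 := by
      rw [← leadingCoeff]
      exact leadingCoeff_ne_zero.mpr hp
    have h2 : ((p.natDegree - 1 : ℕ) : ℝ) + 1 ≠ 0 := by positivity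
    exact mul_ne_zero h1 h2
  have hne : derivative p ≠ 0 := fun h => hcoeff (by rw [h, coeff_zero])
  have hge : p.natDegree - 1 ≤ (derivative p).natDegree := le_natDegree_of_ne_zero hcoeff
  have hdeg' : (derivative p).natDegree = p.natDegree - 1 :=
    le_antisymm (natDegree_derivative_le p) hge
  refine ⟨hne, hdeg', ?_⟩
  have h1 := card_roots_le_derivative p
  have h2 := card_roots' (derivative p)
  rw [hdeg'] at h2
  omega

lemma RRiter {p : ℝ[X]} (hp : p ≠ 0) (hroots : Multiset.card p.roots = p.natDegree) :
    ∀ i ≤ p.natDegree, (derivative^[i] p) ≠ 0 ∧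
      (derivative^[i] p).natDegree = p.natDegree - i ∧
      Multiset.card (derivative^[i] p).roots = p.natDegree - i := by
  intro i
  induction i with
  | zero =>
      intro _
      exact ⟨by simpa using hp, by simp, by simpa using hroots⟩
  | succ i ih =>
      intro hi
      obtain ⟨hne, hdeg, hrc⟩ := ih (by omega)
      have hd0 : (derivative^[i] p).natDegree ≠ 0 := by omega
      have := deriv_step (p := derivative^[i] p) (by rw [hrc, hdeg]) hd0
      rw [Function.iterate_succ_apply']
      refine ⟨this.1, ?_, ?_⟩
      · rw [this.2.1, hdeg]; omega
      · rw [this.2.2, hdeg]; omega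

lemma lemN {S : Multiset ℝ} {j : ℕ} (hj : 1 ≤ j) (hjc : j + 1 ≤ Multiset.card S)
    (hprev : 0 < S.esymm (j - 1)) (hzero : S.esymm j = 0) : S.esymm (j + 1) ≤ 0 := by
  by_contra hpos
  push_neg at hpos
  set N := Multiset.card S with hN
  have hPne : P S ≠ 0 := (monic_P S).ne_zero
  have hPdeg : (P S).natDegree = N := natDegree_P S
  have hProots : Multiset.card (P S).roots = (P S).natDegree := by
    rw [roots_P, Multiset.card_map, hPdeg]
  set d := N - 1 - j with hd
  set g : ℝ[X] := derivative^[d] (P S) with hg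
  obtain ⟨hgne, hgdeg, hgroots⟩ := RRiter hPne hProots d (by omega)
  rw [hPdeg] at hgdeg hgroots
  have hgdeg' : g.natDegree = j + 1 := by rw [hgdeg]; omega
  have hgroots' : Multiset.card g.roots = j + 1 := by rw [hgroots]; omega
  -- coefficients of g
  have hgcoeff : ∀ q, q ≤ j + 1 → g.coeff q
      = ((q + d).descFactorial d : ℝ) * S.esymm (j + 1 - q) := by
    intro q hq
    rw [hg, coeff_iterate_derivative, coeff_P (by omega)]
    have e : N - (q + d) = j + 1 - q := by omega
    rw [e, nsmul_eq_mul]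
  have hdf : ∀ q : ℕ, (0:ℝ) < ((q + d).descFactorial d : ℝ) := by
    intro q
    have : (q + d).descFactorial d ≠ 0 := by
      rw [Ne, Nat.descFactorial_eq_zero_iff_lt]
      omega
    have h0 : 0 < (q + d).descFactorial d := Nat.pos_of_ne_zero this
    exact_mod_cast h0
  have hc0 : 0 < g.coeff 0 := by
    rw [hgcoeff 0 (by omega)]
    simpa using mul_pos (hdf 0) hpos
  have hc1 : g.coeff 1 = 0 := by
    rw [hgcoeff 1 (by omega)]
    have e : j + 1 - 1 = j := by omega
    rw [e, hzero, mul_zero]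
  have hc2 : 0 < g.coeff 2 := by
    rw [hgcoeff 2 (by omega)]
    have e : j + 1 - 2 = j - 1 := by omega
    rw [e]
    exact mul_pos (hdf 2) hprev
  have hlc : 0 < g.leadingCoeff := by
    rw [leadingCoeff, hgdeg', hgcoeff (j+1) le_rfl]
    simpa [esymm_zero] using hdf (j+1)
  -- Vieta on g
  have hv0 := Polynomial.coeff_eq_esymm_roots_of_card (by rw [hgroots', hgdeg'])
    (k := 0) (by omega)
  have hv1 := Polynomial.coeff_eq_esymm_roots_of_card (by rw [hgroots', hgdeg'])
    (k := 1) (by rw [hgdeg']; omega)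
  have hv2 := Polynomial.coeff_eq_esymm_roots_of_card (by rw [hgroots', hgdeg'])
    (k := 2) (by rw [hgdeg']; omega)
  rw [hgdeg'] at hv0 hv1 hv2
  have e0 : j + 1 - 0 = j + 1 := by omega
  have e1 : j + 1 - 1 = j := by omega
  have e2 : j + 1 - 2 = j - 1 := by omega
  rw [e0] at hv0; rw [e1] at hv1; rw [e2] at hv2
  -- esymm j of roots is zero
  have hRj : g.roots.esymm j = 0 := by
    have h0 : g.leadingCoeff * (-1:ℝ) ^ j * g.roots.esymm j = 0 := by
      rw [← hv1]; exact hc1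
    rcases mul_eq_zero.mp h0 with h | h
    · exact absurd h (mul_ne_zero hlc.ne' (pow_ne_zero _ (by norm_num)))
    · exact h
  have hsign : (0:ℝ) < (g.leadingCoeff * (-1) ^ (j+1) * g.roots.esymm (j+1))
      * (g.leadingCoeff * (-1) ^ (j-1) * g.roots.esymm (j-1)) := by
    rw [← hv0, ← hv2]
    exact mul_pos hc0 hc2
  have hmul : 0 < g.roots.esymm (j+1) * g.roots.esymm (j-1) := by
    have hpow : ((-1:ℝ) ^ (j+1)) * ((-1:ℝ) ^ (j-1)) = 1 := by
      rw [← pow_add]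
      have e : j + 1 + (j - 1) = 2 * j := by omega
      rw [e, pow_mul]
      norm_num
    have expand : (g.leadingCoeff * (-1) ^ (j+1) * g.roots.esymm (j+1))
        * (g.leadingCoeff * (-1) ^ (j-1) * g.roots.esymm (j-1))
        = g.leadingCoeff ^ 2 * (((-1:ℝ) ^ (j+1)) * ((-1:ℝ) ^ (j-1)))
          * (g.roots.esymm (j+1) * g.roots.esymm (j-1)) := by ring
    rw [expand, hpow, mul_one] at hsign
    by_contra hcon
    push_neg at hcon
    have := mul_nonpos_of_nonneg_of_nonpos (sq_nonneg g.leadingCoeff) hcon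
    linarith
  have := top_newton hj hgroots' hRj
  linarith

lemma KL : ∀ k : ℕ, ∀ S : Multiset ℝ, Gam k S → k ≤ Multiset.card S →
    ∀ a ∈ S, ∀ j : ℕ, j + 1 ≤ k → 0 < (S.erase a).esymm j := by
  intro k
  induction k with
  | zero => intro S _ _ a _ j hj; omega
  | succ k' ih =>
      intro S hG hk a ha j hj
      rcases Nat.lt_or_ge (j + 1) (k' + 1) with hlt | hge
      · exact ih S (hG.mono (by omega)) (by omega) a ha j (by omega)
      · have hjk : j = k' := by omega
        subst hjk
        rcases Nat.eq_zero_or_pos j with h0 | hj1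
        · subst h0; rw [esymm_zero]; norm_num
        by_contra hcon
        push_neg at hcon
        set T := S.erase a with hT
        have hST : S = a ::ₘ T := (Multiset.cons_erase ha).symm
        have hcS : Multiset.card S = Multiset.card T + 1 := by
          rw [hST, Multiset.card_cons]
        set N := Multiset.card T with hN
        rcases Nat.lt_or_ge N (j + 1) with hsmall | hbig
        · -- base case: card S = j + 1, all entries positive
          have hcard : Multiset.card S = j + 1 := by omega
          have hpos : ∀ x ∈ S, 0 < x := pos_of_Gam_card (by rw [hcard]; exact hG)
          have : 0 < T.esymm j :=
            esymm_pos_of_pos (fun x hx => hpos x (Multiset.mem_of_mem_erase hx))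
              (by rw [← hT]; omega)
          linarith
        · -- main case
          set t₁ : ℝ := 1 + (T.map (fun x => |x|)).sum with ht₁def
          have habs : 0 ≤ (T.map (fun x => |x|)).sum :=
            Multiset.sum_nonneg (by
              intro y hy
              obtain ⟨x, _, rfl⟩ := Multiset.mem_map.mp hy
              exact abs_nonneg x)
          have ht₁ : (0:ℝ) ≤ t₁ := by rw [ht₁def]; linarith
          have hTpos : ∀ x ∈ T.map (· + t₁), 0 < x := by
            intro x hx
            obtain ⟨y, hy, rfl⟩ := Multiset.mem_map.mp hx
            have h1 : |y| ≤ (T.map (fun x => |x|)).sum := by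
              have hyT : T = y ::ₘ T.erase y := (Multiset.cons_erase hy).symm
              rw [hyT, Multiset.map_cons, Multiset.sum_cons]
              have h0 : 0 ≤ ((T.erase y).map (fun x => |x|)).sum :=
                Multiset.sum_nonneg (by
                  intro z hz
                  obtain ⟨w, _, rfl⟩ := Multiset.mem_map.mp hz
                  exact abs_nonneg w)
              linarith
            have h2 : -|y| ≤ y := neg_abs_le y
            rw [ht₁def]
            linarith
          set φ : ℝ[X] := hasseDeriv (N - j) (P T) with hφdef
          have hφ : ∀ t : ℝ, (T.map (· + t)).esymm j = φ.eval t := fun t =>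
            esymm_shift (by omega) t
          have hφ0 : φ.eval 0 ≤ 0 := by
            rw [← hφ 0]
            have : T.map (· + (0:ℝ)) = T := by simp
            rw [this]
            exact hcon
          have hφ1 : 0 < φ.eval t₁ := by
            rw [← hφ t₁]
            exact esymm_pos_of_pos hTpos (by rw [Multiset.card_map]; omega)
          have hivt := intermediate_value_Icc ht₁ (φ.continuous.continuousOn)
          have h0mem : (0:ℝ) ∈ Set.Icc (φ.eval 0) (φ.eval t₁) := ⟨hφ0, hφ1.le⟩
          obtain ⟨t₀, ht₀mem, ht₀eq⟩ := hivt h0mem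
          have ht₀0 : (0:ℝ) ≤ t₀ := ht₀mem.1
          set S' := S.map (· + t₀) with hS'def
          set T' := T.map (· + t₀) with hT'def
          have hS'G : Gam (j + 1) S' := Gam_shift hG hk ht₀0
          have hS'c : S' = (a + t₀) ::ₘ T' := by rw [hS'def, hST, Multiset.map_cons]
          have hT'e : T'.esymm j = 0 := by rw [hT'def, hφ t₀]; exact ht₀eq
          have hT'prev : 0 < T'.esymm (j - 1) := by
            have hmem : a + t₀ ∈ S' := by rw [hS'c]; exact Multiset.mem_cons_self _ _
            have := ih S' (hS'G.mono (by omega))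
              (by rw [hS'def, Multiset.card_map]; omega) (a + t₀) hmem (j - 1) (by omega)
            rwa [hS'c, Multiset.erase_cons_head] at this
          have hT'c : j + 1 ≤ Multiset.card T' := by rw [hT'def, Multiset.card_map]; omega
          have hneg : T'.esymm (j + 1) ≤ 0 := lemN hj1 hT'c hT'prev hT'e
          have hfin : S'.esymm (j + 1) ≤ 0 := by
            rw [hS'c, esymm_cons, hT'e, mul_zero, add_zero]
            exact hneg
          exact absurd (hS'G (j + 1) (by omega) le_rfl) (not_lt.mpr hfin)

lemma MainV : ∀ m : ℕ, ∀ n : ℕ, ∀ κ : Fin n → ℝ, ∀ h : m ≤ n,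
    m + 1 ≤ n → (∀ i j : Fin n, i ≤ j → κ j ≤ κ i) →
    Gam (m + 1) (Multiset.map κ Finset.univ.val) →
    (∏ i : Fin m, κ (Fin.castLE h i)) ≤ (Multiset.map κ Finset.univ.val).esymm m := by
  intro m
  induction m with
  | zero => intro n κ h _ _ _; simp [esymm_zero]
  | succ m ih =>
      intro n κ h hn hsort hG
      obtain ⟨n', rfl⟩ : ∃ n', n = n' + 1 := ⟨n - 1, by omega⟩
      set κ' : Fin n' → ℝ := κ ∘ Fin.succ with hκ'
      have hSc : Multiset.map κ Finset.univ.val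
          = κ 0 ::ₘ Multiset.map κ' Finset.univ.val := by
        rw [Fin.univ_succ, Finset.cons_val, Multiset.map_cons, Finset.map_val,
          Multiset.map_map]
        rfl
      set T := Multiset.map κ' Finset.univ.val with hTdef
      have hTcard : Multiset.card T = n' := by
        rw [hTdef, Multiset.card_map]; simp
      have hScard : Multiset.card (Multiset.map κ Finset.univ.val) = n' + 1 := by
        rw [Multiset.card_map]; simp
      have hmem : κ 0 ∈ Multiset.map κ Finset.univ.val := by
        rw [hSc]; exact Multiset.mem_cons_self _ _
      have herase : (Multiset.map κ Finset.univ.val).erase (κ 0) = T := by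
        rw [hSc, Multiset.erase_cons_head]
      have hKL : ∀ j : ℕ, j + 1 ≤ m + 2 → 0 < T.esymm j := by
        intro j hj
        have := KL (m + 2) (Multiset.map κ Finset.univ.val) hG
          (by rw [hScard]; omega) (κ 0) hmem j hj
        rwa [herase] at this
      have hGT : Gam (m + 1) T := fun j h1 h2 => hKL j (by omega)
      have hsort' : ∀ i j : Fin n', i ≤ j → κ' j ≤ κ' i := fun i j hij =>
        hsort _ _ (by simpa using hij)
      have hIH := ih n' κ' (by omega) (by omega) hsort' hGT
      have hκ0 : 0 < κ 0 := by
        have hsum : 0 < (Multiset.map κ Finset.univ.val).esymm 1 := hG 1 (by omega) (by omega)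
        rw [esymm_one] at hsum
        have he : (Multiset.map κ Finset.univ.val).sum = ∑ i, κ i := rfl
        rw [he] at hsum
        by_contra hle
        push_neg at hle
        have hall : ∀ i : Fin (n' + 1), κ i ≤ 0 := fun i =>
          (hsort 0 i (Fin.zero_le i)).trans hle
        have := Finset.sum_nonpos (fun i (_ : i ∈ Finset.univ) => hall i)
        linarith
      rw [hSc, esymm_cons]
      have hpos : 0 < T.esymm (m + 1) := hKL (m + 1) (by omega)
      have hprod : (∏ i : Fin (m + 1), κ (Fin.castLE h i))
          = κ 0 * ∏ i : Fin m, κ' (Fin.castLE (by omega : m ≤ n') i) := by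
        rw [Fin.prod_univ_succ]
        have e0 : κ (Fin.castLE h 0) = κ 0 := congrArg κ (Fin.ext (by simp))
        rw [e0]
        congr 1
      rw [hprod]
      have hm := mul_le_mul_of_nonneg_left hIH hκ0.le
      linarith

end Stmt13

/-- If κ₁ ≥ ⋯ ≥ κₙ and κ ∈ Γ_{m+1}⁺, then σₘ(κ) ≥ κ₁⋯κₘ. -/
theorem stmt13 (n m : ℕ) (hm : 1 ≤ m) (hmn : m + 1 ≤ n) (κ : Fin n → ℝ)
    (hsort : ∀ i j : Fin n, i ≤ j → κ j ≤ κ i)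
    (hΓ : ∀ j, 1 ≤ j → j ≤ m + 1 → 0 < esymm n j κ) :
    (∏ i : Fin m, κ (Fin.castLE (by omega : m ≤ n) i)) ≤ esymm n m κ := by
  have hb : ∀ j, esymm n j κ = (Multiset.map κ Finset.univ.val).esymm j := by
    intro j
    unfold esymm
    exact (Finset.esymm_map_val κ Finset.univ j).symm
  rw [hb]
  exact Stmt13.MainV m n κ (by omega) hmn hsort
    (fun j h1 h2 => by rw [← hb]; exact hΓ j h1 h2)
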